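/- arXiv:1002.2082 — 4 statements merged into one kernel-verified Lean document; each statement's English description precedes it below -/
import Mathlib

section
/- Let n ≥ 1, σ > 0, and define H(c) = (1 + √(1 + 4n/(c²σ)))^{n/4}·exp((σ/16)(c² + c√(c² + 4n/σ)))·e^{−n/8} for c > 0. Then H'(c) = 0 if and only if (σ²/16)·c·√(c² + 4n/σ)·(c + √(c² + 4n/σ))·(2c + √(c² + 4n/σ) + c²/√(c² + 4n/σ)) = n². -/
open Real

theorem stmt_8 (n : ℕ) (hn : 1 ≤ n) (σ : ℝ) (hσ : 0 < σ)
    (H : ℝ → ℝ)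
    (hH : ∀ c : ℝ, H c =
      (1 + Real.sqrt (1 + 4 * n / (c ^ 2 * σ))) ^ ((n : ℝ) / 4) *
        Real.exp (σ / 16 * (c ^ 2 + c * Real.sqrt (c ^ 2 + 4 * n / σ))) *
        Real.exp (-(n : ℝ) / 8)) :
    ∀ c : ℝ, 0 < c →
      (deriv H c = 0 ↔
        σ ^ 2 / 16 * c * Real.sqrt (c ^ 2 + 4 * n / σ) *
          (c + Real.sqrt (c ^ 2 + 4 * n / σ)) *
          (2 * c + Real.sqrt (c ^ 2 + 4 * n / σ) + c ^ 2 / Real.sqrt (c ^ 2 + 4 * n / σ)) =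
          (n : ℝ) ^ 2) := by
  have hn' : (1:ℝ) ≤ (n:ℝ) := by exact_mod_cast hn
  have hn0 : (0:ℝ) < (n:ℝ) := lt_of_lt_of_le one_pos hn'
  set ψ : ℝ → ℝ := fun x =>
    (n:ℝ)/4 * (Real.log (x + Real.sqrt (x^2 + 4*n/σ)) - Real.log x) +
      σ/16 * (x^2 + x * Real.sqrt (x^2 + 4*n/σ)) - (n:ℝ)/8 with hψdef
  -- H agrees with exp ∘ ψ on positive reals
  have hkey : ∀ x : ℝ, 0 < x → H x = Real.exp (ψ x) := by
    intro x hx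
    have hx2 : (0:ℝ) < x^2 + 4*n/σ := by positivity
    have hsx : 0 < Real.sqrt (x^2 + 4*n/σ) := Real.sqrt_pos.mpr hx2
    have hq : 1 + 4*(n:ℝ)/(x^2*σ) = (x^2 + 4*n/σ)/x^2 := by
      field_simp
    have hin : Real.sqrt (1 + 4*(n:ℝ)/(x^2*σ)) = Real.sqrt (x^2 + 4*n/σ) / x := by
      rw [hq, Real.sqrt_div hx2.le, Real.sqrt_sq hx.le]
    have hbase : 1 + Real.sqrt (1 + 4*(n:ℝ)/(x^2*σ)) = (x + Real.sqrt (x^2 + 4*n/σ))/x := by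
      rw [hin]; field_simp
    have hbpos : (0:ℝ) < (x + Real.sqrt (x^2 + 4*n/σ))/x := by positivity
    rw [hH x, hbase, Real.rpow_def_of_pos hbpos,
      Real.log_div (by positivity) hx.ne', ← Real.exp_add, ← Real.exp_add]
    congr 1
    simp only [hψdef]
    ring
  intro c hc
  have hc2 : (0:ℝ) < c^2 + 4*n/σ := by positivity
  set s : ℝ := Real.sqrt (c^2 + 4*n/σ) with hsdef
  have hs : 0 < s := Real.sqrt_pos.mpr hc2
  have hs2 : s^2 = c^2 + 4*n/σ := Real.sq_sqrt hc2.le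
  have hcs : (0:ℝ) < c + s := by positivity
  -- derivative computation
  have h1 : HasDerivAt (fun x : ℝ => x^2 + 4*(n:ℝ)/σ) (2*c) c := by
    simpa using (hasDerivAt_pow 2 c).add_const (4*(n:ℝ)/σ)
  have hg : HasDerivAt (fun x : ℝ => Real.sqrt (x^2 + 4*n/σ)) (c/s) c := by
    have := h1.sqrt hc2.ne'
    convert this using 1
    rw [← hsdef]; field_simp
  have hlog1 : HasDerivAt (fun x : ℝ => Real.log (x + Real.sqrt (x^2 + 4*n/σ)))
      ((1 + c/s)/(c + s)) c := by
    have := ((hasDerivAt_id c).add hg).log (by exact hcs.ne')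
    simpa [← hsdef] using this
  have hlog2 : HasDerivAt Real.log c⁻¹ c := Real.hasDerivAt_log hc.ne'
  have hpoly : HasDerivAt (fun x : ℝ => x^2 + x * Real.sqrt (x^2 + 4*n/σ))
      (2*c + (1*s + c*(c/s))) c := by
    have := ((hasDerivAt_pow 2 c).fun_add ((hasDerivAt_id c).fun_mul hg))
    simpa [← hsdef] using this
  set D : ℝ := (n:ℝ)/4 * ((1 + c/s)/(c + s) - c⁻¹) + σ/16 * (2*c + (1*s + c*(c/s)))
    with hDdef
  have hψ : HasDerivAt ψ D c := by
    have := (((hlog1.sub hlog2).const_mul ((n:ℝ)/4)).add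
      (hpoly.const_mul (σ/16))).sub_const ((n:ℝ)/8)
    simpa [hψdef, hDdef] using this
  have hexp : HasDerivAt (fun x => Real.exp (ψ x)) (Real.exp (ψ c) * D) c := hψ.exp
  have hEq : H =ᶠ[nhds c] fun x => Real.exp (ψ x) := by
    filter_upwards [eventually_gt_nhds hc] with x hx using hkey x hx
  have hderiv : deriv H c = Real.exp (ψ c) * D := by
    rw [hEq.deriv_eq, hexp.deriv]
  rw [hderiv, mul_eq_zero, or_iff_right (Real.exp_ne_zero _)]
  -- now show D = 0 ↔ equation
  have hσs : σ * s^2 = σ * c^2 + 4*n := by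
    rw [hs2]; field_simp
  have hD2 : D = (n:ℝ)/4 * ((c - s)/(s*c)) + σ/16*(2*c + s + c^2/s) := by
    rw [hDdef]
    field_simp
    ring
  have h6 : ((c - s)/(s*c)) * (σ*c*s*(c+s)) = σ*c^2 - σ*s^2 := by
    field_simp
    ring
  have h7 : σ*c^2 - σ*s^2 = -(4*(n:ℝ)) := by linarith
  have key : D * (σ*c*s*(c+s)) =
      σ^2/16 * c * s * (c + s) * (2*c + s + c^2/s) - (n:ℝ)^2 := by
    rw [hD2]
    calc ((n:ℝ)/4 * ((c - s)/(s*c)) + σ/16*(2*c + s + c^2/s)) * (σ*c*s*(c+s))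
        = (n:ℝ)/4 * (((c - s)/(s*c)) * (σ*c*s*(c+s)))
            + σ/16*(2*c + s + c^2/s)*(σ*c*s*(c+s)) := by ring
      _ = (n:ℝ)/4 * (-(4*(n:ℝ)))
            + σ/16*(2*c + s + c^2/s)*(σ*c*s*(c+s)) := by rw [h6, h7]
      _ = σ^2/16 * c * s * (c + s) * (2*c + s + c^2/s) - (n:ℝ)^2 := by ring
  have hpos : (0:ℝ) < σ*c*s*(c+s) := by positivity
  constructor
  · intro h
    have h0 : (0:ℝ) = σ^2/16 * c * s * (c + s) * (2*c + s + c^2/s) - (n:ℝ)^2 := by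
      rw [← key, h, zero_mul]
    linarith
  · intro h
    have h0 : D * (σ*c*s*(c+s)) = 0 := by rw [key, h]; ring
    rcases mul_eq_zero.mp h0 with h1 | h1
    · exact h1
    · exact absurd h1 hpos.ne'
end

section
/- Let n ≥ 1, σ > 0. The MN function H(c) = (1 + √(1 + 4n/(c²σ)))^{n/4}·exp((σ/16)(c² + c√(c² + 4n/σ)))·e^{−n/8} attains a unique global minimum on (0, ∞). -/
open Real

noncomputable def GG (a v : ℝ) : ℝ := 2*a*(Real.log (2*v) - Real.log (v - a)) + v
noncomputable def mm (a c : ℝ) : ℝ := (c + Real.sqrt (c^2 + a))^2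

lemma GG_deriv {a : ℝ} (ha : 0 < a) {x : ℝ} (hx : a < x) :
    HasDerivAt (GG a) ((x - 2*a)*(x + a)/(x*(x - a))) x := by
  have hx0 : 0 < x := lt_trans ha hx
  have hxa : 0 < x - a := sub_pos.2 hx
  have h1 : HasDerivAt (fun v : ℝ => Real.log (2*v)) (2*1/(2*x)) x :=
    ((hasDerivAt_id x).const_mul 2).log (by positivity)
  have h2 : HasDerivAt (fun v : ℝ => Real.log (v - a)) ((1:ℝ)/(x-a)) x := by
    simpa using ((hasDerivAt_id x).sub_const a).log (ne_of_gt hxa)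
  have h3 : HasDerivAt (GG a) (2*a*(2*1/(2*x) - 1/(x-a)) + 1) x := ((h1.sub h2).const_mul (2*a)).add (hasDerivAt_id x)
  convert h3 using 1
  field_simp
  ring

lemma GG_min {a : ℝ} (ha : 0 < a) {v : ℝ} (hv : a < v) (hne : v ≠ 2*a) :
    GG a (2*a) < GG a v := by
  have h2a : a < 2*a := by linarith
  have contG : ContinuousOn (GG a) (Set.Ioi a) := fun x hx =>
    (GG_deriv ha hx).differentiableAt.continuousAt.continuousWithinAt
  have hanti : StrictAntiOn (GG a) (Set.Ioc a (2*a)) := by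
    apply strictAntiOn_of_deriv_neg (convex_Ioc a (2*a)) (contG.mono Set.Ioc_subset_Ioi_self)
    intro x hx
    rw [interior_Ioc] at hx
    rw [(GG_deriv ha hx.1).deriv]
    have hx0 : 0 < x := lt_trans ha hx.1
    have hxa : 0 < x - a := sub_pos.2 hx.1
    apply div_neg_of_neg_of_pos
    · exact mul_neg_of_neg_of_pos (by linarith [hx.2]) (by linarith)
    · exact mul_pos hx0 hxa
  have hmono : StrictMonoOn (GG a) (Set.Ici (2*a)) := by
    apply strictMonoOn_of_deriv_pos (convex_Ici (2*a))
      (contG.mono (fun x hx => lt_of_lt_of_le h2a hx))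
    intro x hx
    rw [interior_Ici] at hx
    have hax : a < x := lt_trans h2a hx
    rw [(GG_deriv ha hax).deriv]
    have hx0 : 0 < x := lt_trans ha hax
    have hxa : 0 < x - a := sub_pos.2 hax
    have hx2 : 2*a < x := hx
    apply div_pos (mul_pos (by linarith) (by linarith)) (mul_pos hx0 hxa)
  rcases lt_or_gt_of_ne hne with h | h
  · exact hanti ⟨hv, h.le⟩ ⟨h2a, le_refl _⟩ h
  · exact hmono (Set.self_mem_Ici) h.le h

lemma mm_gt {a : ℝ} (ha : 0 < a) {c : ℝ} (hc : 0 < c) : a < mm a c := by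
  have hu2 : Real.sqrt (c^2 + a) ^ 2 = c^2 + a := Real.sq_sqrt (by positivity)
  have hu : 0 < Real.sqrt (c^2 + a) := Real.sqrt_pos.2 (by positivity)
  unfold mm
  nlinarith [hu, hc, hu2]

lemma mm_mono {a : ℝ} (ha : 0 < a) : StrictMonoOn (mm a) (Set.Ioi (0:ℝ)) := by
  intro x hx y hy hxy
  have hx0 : (0:ℝ) < x := hx
  have hy0 : (0:ℝ) < y := hy
  have hsq : Real.sqrt (x^2+a) < Real.sqrt (y^2+a) :=
    Real.sqrt_lt_sqrt (by positivity) (by nlinarith)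
  have hux : 0 < Real.sqrt (x^2+a) := Real.sqrt_pos.2 (by positivity)
  unfold mm
  apply pow_lt_pow_left₀ (by linarith) (by positivity) (by norm_num)

lemma mm_cstar {a : ℝ} (ha : 0 < a) : mm a (Real.sqrt (a/8)) = 2*a := by
  have hs2 : Real.sqrt (a/8) ^ 2 = a/8 := Real.sq_sqrt (by positivity)
  have h1 : Real.sqrt (Real.sqrt (a/8)^2 + a) = 3 * Real.sqrt (a/8) := by
    rw [hs2, show a/8 + a = 9*(a/8) by ring, Real.sqrt_mul (by norm_num) _,
        show Real.sqrt 9 = 3 from by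
          rw [show (9:ℝ)=3^2 by norm_num, Real.sqrt_sq (by norm_num)]]
  unfold mm
  rw [h1]
  nlinarith [hs2]

theorem stmt_9 (n : ℕ) (hn : 1 ≤ n) (σ : ℝ) (hσ : 0 < σ)
    (H : ℝ → ℝ)
    (hH : ∀ c : ℝ, H c =
      (1 + Real.sqrt (1 + 4 * n / (c ^ 2 * σ))) ^ ((n : ℝ) / 4) *
        Real.exp (σ / 16 * (c ^ 2 + c * Real.sqrt (c ^ 2 + 4 * n / σ))) *
        Real.exp (-(n : ℝ) / 8)) :
    ∃! c : ℝ, 0 < c ∧ ∀ x : ℝ, 0 < x → H c ≤ H x := by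
  have hn1 : (1:ℝ) ≤ (n:ℝ) := by exact_mod_cast hn
  have hn0 : (0:ℝ) < n := by linarith
  have ha : (0:ℝ) < 4*n/σ := by positivity
  have key : ∀ c : ℝ, 0 < c →
      H c = Real.exp (σ/32 * GG (4*n/σ) (mm (4*n/σ) c) - n/4) := by
    intro c hc
    have hc2 : (0:ℝ) < c^2 := by positivity
    have hu2 : Real.sqrt (c^2 + 4*n/σ) ^ 2 = c^2 + 4*n/σ := Real.sq_sqrt (by positivity)
    have hupos : 0 < Real.sqrt (c^2 + 4*n/σ) := Real.sqrt_pos.2 (by positivity)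
    set u := Real.sqrt (c^2 + 4*n/σ) with hu_def
    have hcu : 0 < c + u := by linarith
    have h1 : Real.sqrt (1 + 4*(n:ℝ)/(c^2*σ)) = u/c := by
      rw [show (1 + 4*(n:ℝ)/(c^2*σ)) = (c^2 + 4*n/σ)/c^2 by
            field_simp,
        Real.sqrt_div (by positivity) _, Real.sqrt_sq hc.le]
    rw [hH c, ← hu_def, h1, show 1 + u/c = (c+u)/c by field_simp,
      Real.rpow_def_of_pos (div_pos hcu hc), ← Real.exp_add, ← Real.exp_add]
    congr 1
    have hmsub : mm (4*n/σ) c - 4*n/σ = 2*c*(c+u) := by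
      unfold mm; rw [← hu_def]; linear_combination hu2
    have hlog1 : Real.log ((c+u)/c) = Real.log (c+u) - Real.log c :=
      Real.log_div (by positivity) (by positivity)
    have hlog2 : Real.log (2 * mm (4*n/σ) c) = Real.log 2 + 2 * Real.log (c+u) := by
      unfold mm; rw [← hu_def, Real.log_mul (by norm_num) (by positivity), Real.log_pow]
      push_cast; ring
    have hlog3 : Real.log (mm (4*n/σ) c - 4*n/σ)
        = Real.log 2 + Real.log c + Real.log (c+u) := by
      rw [hmsub, Real.log_mul (by positivity) (by positivity),
        Real.log_mul (by norm_num) (by positivity)]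
    have hmm2 : mm (4*n/σ) c = 2*c*(c+u) + 4*n/σ := by linarith [hmsub]
    have hinv : σ * σ⁻¹ = 1 := mul_inv_cancel₀ (ne_of_gt hσ)
    unfold GG
    rw [hlog1, hlog2, hlog3, hmm2]
    linear_combination (-(((n:ℝ)/4) * (Real.log (c+u) - Real.log c) + (n:ℝ)/8)) * hinv
  set cs : ℝ := Real.sqrt ((4*n/σ)/8) with hcs_def
  have hcpos : 0 < cs := Real.sqrt_pos.2 (by positivity)
  have hmc : mm (4*n/σ) cs = 2*(4*n/σ) := mm_cstar ha
  have hGle : ∀ x : ℝ, 0 < x →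
      GG (4*n/σ) (mm (4*n/σ) cs) ≤ GG (4*n/σ) (mm (4*n/σ) x) := by
    intro x hx
    rw [hmc]
    by_cases h : mm (4*n/σ) x = 2*(4*n/σ)
    · rw [h]
    · exact (GG_min ha (mm_gt ha hx) h).le
  have hle : ∀ x : ℝ, 0 < x → H cs ≤ H x := by
    intro x hx
    rw [key cs hcpos, key x hx]
    apply Real.exp_le_exp.2
    have := hGle x hx
    nlinarith [this, hσ]
  refine ⟨cs, ⟨hcpos, hle⟩, ?_⟩
  rintro y ⟨hy, hmin⟩
  by_contra hne
  have hmy : mm (4*n/σ) y ≠ 2*(4*n/σ) := by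
    intro h
    exact hne ((mm_mono ha).injOn hy hcpos (h.trans hmc.symm))
  have hlt : GG (4*n/σ) (2*(4*n/σ)) < GG (4*n/σ) (mm (4*n/σ) y) :=
    GG_min ha (mm_gt ha hy) hmy
  have : H cs < H y := by
    rw [key cs hcpos, key y hy, hmc]
    apply Real.exp_lt_exp.2
    nlinarith [hlt, hσ]
  exact absurd (hmin cs hcpos) (not_le.2 this)
end

section
/- Let σ > 0, n ≥ 1, and β real with 1 + β − n < 0 and 1 + β + n > 0. Define H(c) = c^{(1+β−n)/4}·((ξ*(c))^{(1+β+n)/2}·exp(c·ξ*(c) − ξ*(c)²/σ))^{1/2} where ξ*(c) = (cσ + √(c²σ² + 4σ(1+β+n)))/4. Then H(c) → ∞ as c → 0⁺ and H(c) → ∞ as c → ∞. -/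
open Real Filter

theorem stmt_13 (n : ℕ) (hn : 1 ≤ n) (σ β : ℝ) (hσ : 0 < σ)
    (hlt : 1 + β - (n : ℝ) < 0) (hgt : 0 < 1 + β + (n : ℝ))
    (ξstar : ℝ → ℝ)
    (hξ : ∀ c : ℝ, ξstar c =
      (c * σ + Real.sqrt (c ^ 2 * σ ^ 2 + 4 * σ * (1 + β + (n : ℝ)))) / 4)
    (H : ℝ → ℝ)
    (hH : ∀ c : ℝ, H c =
      c ^ ((1 + β - (n : ℝ)) / 4) *
        ((ξstar c) ^ ((1 + β + (n : ℝ)) / 2) *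
          Real.exp (c * ξstar c - (ξstar c) ^ 2 / σ)) ^ ((1 : ℝ) / 2)) :
    Tendsto H (nhdsWithin 0 (Set.Ioi 0)) atTop ∧ Tendsto H atTop atTop := by
  set K : ℝ := 1 + β + (n : ℝ) with hKdef
  set a : ℝ := (1 + β - (n : ℝ)) / 4 with hadef
  have hK : 0 < K := hgt
  have ha : a < 0 := by simp only [hadef]; linarith
  -- positivity of the sqrt argument
  have harg : ∀ c : ℝ, 0 < c ^ 2 * σ ^ 2 + 4 * σ * K := by
    intro c; positivity
  have hsq : ∀ c : ℝ, (Real.sqrt (c ^ 2 * σ ^ 2 + 4 * σ * K)) ^ 2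
      = c ^ 2 * σ ^ 2 + 4 * σ * K := fun c => Real.sq_sqrt (harg c).le
  -- ξ positivity for c ≥ 0
  have hξpos : ∀ c : ℝ, 0 ≤ c → 0 < ξstar c := by
    intro c hc
    rw [hξ c]
    have h1 : 0 < Real.sqrt (c ^ 2 * σ ^ 2 + 4 * σ * K) := Real.sqrt_pos.mpr (harg c)
    have h2 : 0 ≤ c * σ := by positivity
    linarith
  -- ξ lower bound
  have hξge : ∀ c : ℝ, c * σ / 4 ≤ ξstar c := by
    intro c
    rw [hξ c]
    have h1 : 0 ≤ Real.sqrt (c ^ 2 * σ ^ 2 + 4 * σ * K) := Real.sqrt_nonneg _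
    linarith
  -- key identity
  have hid : ∀ c : ℝ, c * ξstar c - (ξstar c) ^ 2 / σ = c * ξstar c / 2 - K / 4 := by
    intro c
    rw [hξ c]
    have hs := hsq c
    set s := Real.sqrt (c ^ 2 * σ ^ 2 + 4 * σ * K) with hsdef
    field_simp
    nlinarith [hs]
  -- continuity of ξ
  have hξcont : Continuous ξstar := by
    have : ξstar = fun c => (c * σ + Real.sqrt (c ^ 2 * σ ^ 2 + 4 * σ * K)) / 4 :=
      funext hξ
    rw [this]
    continuity
  constructor
  · -- c → 0⁺
    set G : ℝ → ℝ := fun c => ((ξstar c) ^ (K / 2) *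
        Real.exp (c * ξstar c - (ξstar c) ^ 2 / σ)) ^ ((1 : ℝ) / 2) with hGdef
    have hHG : H = fun c => c ^ a * G c := funext hH
    rw [hHG]
    have hξ0 : 0 < ξstar 0 := hξpos 0 le_rfl
    have hG0 : 0 < G 0 := by
      have : (0:ℝ) < (ξstar 0) ^ (K / 2) * Real.exp (0 * ξstar 0 - (ξstar 0) ^ 2 / σ) := by
        positivity
      positivity
    have hGc : Tendsto G (nhdsWithin 0 (Set.Ioi 0)) (nhds (G 0)) := by
      have : ContinuousAt G 0 := by
        apply ContinuousAt.rpow_const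
        · apply ContinuousAt.mul
          · exact (hξcont.continuousAt).rpow_const (Or.inl hξ0.ne')
          · exact (Real.continuous_exp.comp (by fun_prop)).continuousAt
        · exact Or.inr (by norm_num)
      exact this.tendsto.mono_left nhdsWithin_le_nhds
    have hpow : Tendsto (fun c : ℝ => c ^ a) (nhdsWithin 0 (Set.Ioi 0)) atTop := by
      have h1 : Tendsto (fun c : ℝ => c ^ (-a)) (nhdsWithin 0 (Set.Ioi 0))
          (nhdsWithin 0 (Set.Ioi 0)) := by
        apply tendsto_nhdsWithin_of_tendsto_nhds_of_eventually_within
        · have : ContinuousAt (fun c : ℝ => c ^ (-a)) 0 :=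
            Real.continuousAt_rpow_const 0 (-a) (Or.inr (by linarith))
          have h0 : (0:ℝ) ^ (-a) = 0 := Real.zero_rpow (by linarith)
          have := this.tendsto.mono_left (nhdsWithin_le_nhds
            (s := Set.Ioi (0:ℝ)))
          rwa [h0] at this
        · filter_upwards [self_mem_nhdsWithin] with c hc
          exact Real.rpow_pos_of_pos hc _
      have h2 := tendsto_inv_nhdsGT_zero.comp h1
      refine h2.congr' ?_
      filter_upwards [self_mem_nhdsWithin] with c hc
      simp only [Function.comp]
      rw [← Real.rpow_neg (le_of_lt hc), neg_neg]
    exact Tendsto.atTop_mul_pos hG0 hpow hGc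
  · -- c → ∞
    -- lower bound function
    have hF : Tendsto (fun c : ℝ => Real.exp (a * Real.log c + σ / 16 * c ^ 2 - K / 8))
        atTop atTop := by
      apply Real.tendsto_exp_atTop.comp
      refine tendsto_atTop_mono' atTop (f₁ := fun c : ℝ => a * c + σ / 16 * c ^ 2 - K / 8) ?_ ?_
      · filter_upwards [eventually_ge_atTop (1:ℝ)] with c hc
        have hlog : Real.log c ≤ c := Real.log_le_sub_one_of_pos (by linarith) |>.trans (by linarith)
        have : a * Real.log c ≥ a * c := by
          apply mul_le_mul_of_nonpos_left hlog ha.le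
        linarith
      · have h1 : Tendsto (fun c : ℝ => c * (a + σ / 16 * c)) atTop atTop := by
          apply Tendsto.atTop_mul_atTop₀ tendsto_id
          apply tendsto_atTop_add_const_left
          exact (tendsto_const_mul_atTop_of_pos (by positivity)).mpr tendsto_id
        have h2 : Tendsto (fun c : ℝ => c * (a + σ / 16 * c) - K / 8) atTop atTop :=
          tendsto_atTop_add_const_right _ _ h1
        refine h2.congr fun c => by ring
    apply tendsto_atTop_mono' atTop _ hF
    filter_upwards [eventually_ge_atTop (max 1 (4 / σ))] with c hc
    have hc1 : (1:ℝ) ≤ c := le_trans (le_max_left _ _) hc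
    have hc0 : 0 < c := by linarith
    have hcσ : 4 / σ ≤ c := le_trans (le_max_right _ _) hc
    have hξ1 : 1 ≤ ξstar c := by
      have := hξge c
      have : c * σ / 4 ≥ 1 := by
        rw [ge_iff_le, le_div_iff₀ (by norm_num)]
        calc (1:ℝ) * 4 = 4 := by ring
        _ = (4 / σ) * σ := by field_simp
        _ ≤ c * σ := by apply mul_le_mul_of_nonneg_right hcσ hσ.le
      linarith [hξge c]
    have hξp : 0 < ξstar c := hξpos c hc0.le
    -- rewrite H c
    rw [hH c]
    have hsplit : ((ξstar c) ^ (K / 2) * Real.exp (c * ξstar c - (ξstar c) ^ 2 / σ))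
        ^ ((1:ℝ)/2)
        = (ξstar c) ^ (K / 4) * Real.exp (c * ξstar c / 4 - K / 8) := by
      rw [Real.mul_rpow (Real.rpow_nonneg hξp.le _) (Real.exp_nonneg _),
        ← Real.rpow_mul hξp.le, ← Real.exp_mul]
      congr 1
      · ring_nf
      · rw [hid c]; ring
    rw [hsplit]
    have hexp : Real.exp (σ / 16 * c ^ 2 - K / 8)
        ≤ (ξstar c) ^ (K / 4) * Real.exp (c * ξstar c / 4 - K / 8) := by
      calc Real.exp (σ / 16 * c ^ 2 - K / 8) ≤ Real.exp (c * ξstar c / 4 - K / 8) := by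
            apply Real.exp_le_exp.mpr
            nlinarith [hξge c, hc0.le]
        _ ≤ (ξstar c) ^ (K / 4) * Real.exp (c * ξstar c / 4 - K / 8) :=
            le_mul_of_one_le_left (Real.exp_nonneg _)
              (Real.one_le_rpow hξ1 (by positivity))
    calc Real.exp (a * Real.log c + σ / 16 * c ^ 2 - K / 8)
        = Real.exp (a * Real.log c) * Real.exp (σ / 16 * c ^ 2 - K / 8) := by
          rw [← Real.exp_add]; ring_nf
      _ ≤ Real.exp (a * Real.log c)
          * ((ξstar c) ^ (K / 4) * Real.exp (c * ξstar c / 4 - K / 8)) :=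
          mul_le_mul_of_nonneg_left hexp (Real.exp_nonneg _)
      _ = c ^ a * ((ξstar c) ^ (K / 4) * Real.exp (c * ξstar c / 4 - K / 8)) := by
          rw [Real.rpow_def_of_pos hc0, mul_comm (Real.log c) a]
end

section
/- Let σ > 0, n ≥ 1, and β real with 1 + β − n > 0. Define H(c) = c^{(1+β−n)/4}·((ξ*(c))^{(1+β+n)/2}·exp(c·ξ*(c) − ξ*(c)²/σ))^{1/2} with ξ*(c) = (cσ + √(c²σ² + 4σ(1+β+n)))/4. Then H(c) → 0 as c → 0⁺ and H(c) → ∞ as c → ∞. -/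
open Real Filter

theorem stmt_14 (n : ℕ) (hn : 1 ≤ n) (σ β : ℝ) (hσ : 0 < σ)
    (hgt : 0 < 1 + β - (n : ℝ))
    (ξstar : ℝ → ℝ)
    (hξ : ∀ c : ℝ, ξstar c =
      (c * σ + Real.sqrt (c ^ 2 * σ ^ 2 + 4 * σ * (1 + β + (n : ℝ)))) / 4)
    (H : ℝ → ℝ)
    (hH : ∀ c : ℝ, H c =
      c ^ ((1 + β - (n : ℝ)) / 4) *
        ((ξstar c) ^ ((1 + β + (n : ℝ)) / 2) *
          Real.exp (c * ξstar c - (ξstar c) ^ 2 / σ)) ^ ((1 : ℝ) / 2)) :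
    Tendsto H (nhdsWithin 0 (Set.Ioi 0)) (nhds 0) ∧ Tendsto H atTop atTop := by
  set B : ℝ := 1 + β + (n : ℝ) with hBdef
  have hn1 : (1 : ℝ) ≤ (n : ℝ) := by exact_mod_cast hn
  have hB : 0 < B := by simp only [hBdef]; linarith
  have ha : 0 < (1 + β - (n : ℝ)) / 4 := by linarith
  have hb : 0 < B / 2 := by linarith
  -- continuity of ξstar
  have hξcont : Continuous ξstar := by
    have : Continuous fun c : ℝ =>
        (c * σ + Real.sqrt (c ^ 2 * σ ^ 2 + 4 * σ * B)) / 4 := by fun_prop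
    convert this using 1
    funext c; exact hξ c
  -- ξstar is nonneg for c ≥ 0, and positive at 0
  have hξnonneg : ∀ c : ℝ, 0 ≤ c → 0 ≤ ξstar c := by
    intro c hc
    rw [hξ c]
    have := Real.sqrt_nonneg (c ^ 2 * σ ^ 2 + 4 * σ * B)
    have : 0 ≤ c * σ := mul_nonneg hc hσ.le
    positivity
  have hξ0pos : 0 < ξstar 0 := by
    rw [hξ 0]
    have h4 : 0 < 4 * σ * B := by positivity
    have h5 : 0 < Real.sqrt (0 ^ 2 * σ ^ 2 + 4 * σ * B) := by
      apply Real.sqrt_pos.mpr; nlinarith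
    rw [zero_mul, zero_add]
    exact div_pos h5 (by norm_num)
  constructor
  · -- limit at 0⁺
    have hg : ContinuousAt (fun c =>
        ((ξstar c) ^ (B / 2) * Real.exp (c * ξstar c - (ξstar c) ^ 2 / σ))
          ^ ((1 : ℝ) / 2)) 0 := by
      have h1 : ContinuousAt (fun c => (ξstar c) ^ (B / 2)) 0 :=
        hξcont.continuousAt.rpow_const (Or.inl hξ0pos.ne')
      have h2 : ContinuousAt (fun c => Real.exp (c * ξstar c - (ξstar c) ^ 2 / σ)) 0 := by
        fun_prop
      have h3 : ContinuousAt (fun c =>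
          (ξstar c) ^ (B / 2) * Real.exp (c * ξstar c - (ξstar c) ^ 2 / σ)) 0 := h1.mul h2
      have hpos : 0 < (ξstar 0) ^ (B / 2) * Real.exp (0 * ξstar 0 - (ξstar 0) ^ 2 / σ) := by
        positivity
      exact h3.rpow_const (Or.inl hpos.ne')
    have hf : Tendsto (fun c : ℝ => c ^ ((1 + β - (n : ℝ)) / 4))
        (nhdsWithin 0 (Set.Ioi 0)) (nhds 0) := by
      have : ContinuousAt (fun c : ℝ => c ^ ((1 + β - (n : ℝ)) / 4)) 0 :=
        Real.continuousAt_rpow_const _ _ (Or.inr ha.le)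
      have h0 : (0 : ℝ) ^ ((1 + β - (n : ℝ)) / 4) = 0 := Real.zero_rpow ha.ne'
      have := this.continuousWithinAt (s := Set.Ioi 0)
      rw [ContinuousWithinAt, h0] at this
      exact this
    have := hf.mul (hg.continuousWithinAt (s := Set.Ioi 0))
    rw [zero_mul] at this
    refine Tendsto.congr (fun c => (hH c).symm) this
  · -- limit at ∞
    have hξtop : Tendsto ξstar atTop atTop := by
      apply tendsto_atTop_mono (f := fun c => c * σ / 4)
      · intro c
        rw [hξ c]
        have := Real.sqrt_nonneg (c ^ 2 * σ ^ 2 + 4 * σ * B)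
        linarith
      · exact Tendsto.atTop_div_const (by norm_num)
          (tendsto_id.atTop_mul_const hσ)
    have hf : Tendsto (fun c : ℝ => c ^ ((1 + β - (n : ℝ)) / 4)) atTop atTop :=
      tendsto_rpow_atTop ha
    -- eventually the exponent is nonneg, hence g c ≥ ξstar c ^ (B/4)
    have hev : ∀ᶠ c in atTop, (ξstar c) ^ (B / 4) ≤
        ((ξstar c) ^ (B / 2) * Real.exp (c * ξstar c - (ξstar c) ^ 2 / σ))
          ^ ((1 : ℝ) / 2) := by
      filter_upwards [eventually_ge_atTop (max 0 (Real.sqrt (B / (2 * σ))))] with c hc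
      have hc0 : 0 ≤ c := le_trans (le_max_left _ _) hc
      have hcc : Real.sqrt (B / (2 * σ)) ≤ c := le_trans (le_max_right _ _) hc
      have hξc : 0 ≤ ξstar c := hξnonneg c hc0
      have hc2 : B / (2 * σ) ≤ c ^ 2 := by
        have := Real.sq_sqrt (show (0:ℝ) ≤ B / (2 * σ) by positivity)
        nlinarith [Real.sqrt_nonneg (B / (2 * σ))]
      -- ξstar c ≤ c * σ
      have hle : ξstar c ≤ c * σ := by
        rw [hξ c]
        have hs : Real.sqrt (c ^ 2 * σ ^ 2 + 4 * σ * B) ≤ 3 * (c * σ) := by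
          have h1 : c ^ 2 * σ ^ 2 + 4 * σ * B ≤ (3 * (c * σ)) ^ 2 := by
            have : B ≤ 2 * σ * c ^ 2 := by
              rw [div_le_iff₀ (by positivity)] at hc2; nlinarith
            nlinarith
          calc Real.sqrt (c ^ 2 * σ ^ 2 + 4 * σ * B)
              ≤ Real.sqrt ((3 * (c * σ)) ^ 2) := Real.sqrt_le_sqrt h1
            _ = 3 * (c * σ) := by
                rw [Real.sqrt_sq (by positivity)]
        linarith
      have hE : 0 ≤ c * ξstar c - (ξstar c) ^ 2 / σ := by
        rw [sub_nonneg, div_le_iff₀ hσ]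
        nlinarith
      have h1 : (ξstar c) ^ (B / 2) ≤
          (ξstar c) ^ (B / 2) * Real.exp (c * ξstar c - (ξstar c) ^ 2 / σ) := by
        apply le_mul_of_one_le_right (Real.rpow_nonneg hξc _)
        exact Real.one_le_exp hE
      calc (ξstar c) ^ (B / 4) = ((ξstar c) ^ (B / 2)) ^ ((1:ℝ) / 2) := by
            rw [← Real.rpow_mul hξc]; ring_nf
        _ ≤ _ := Real.rpow_le_rpow (Real.rpow_nonneg hξc _) h1 (by norm_num)
    have hg : Tendsto (fun c =>
        ((ξstar c) ^ (B / 2) * Real.exp (c * ξstar c - (ξstar c) ^ 2 / σ))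
          ^ ((1 : ℝ) / 2)) atTop atTop := by
      apply tendsto_atTop_mono' _ hev
      exact (tendsto_rpow_atTop (by linarith : (0:ℝ) < B / 4)).comp hξtop
    have := hf.atTop_mul_atTop₀ hg
    refine Tendsto.congr (fun c => (hH c).symm) this
end
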